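/- Let B be a finite band, k a commutative ring, and σ: kB → kΛ(B) the k-algebra homomorphism induced by the support map. Then the kernel of σ is a nilpotent ideal of kB. -/

import Mathlib

set_option linter.unusedSectionVars false

open scoped Pointwise

/-- The principal two-sided ideal `BbB = {u*b*v}` in a semigroup. -/
def prinIdeal {B : Type*} [Semigroup B] (b : B) : Set B := {z | ∃ u v : B, z = u * b * v}

section BandLemmas

variable {B : Type*} [Semigroup B]

theorem bnd_mem_self (hband : ∀ x : B, x * x = x) (b : B) : b ∈ prinIdeal b :=
  ⟨b, b, by rw [hband, hband]⟩

theorem prin_trans {z b : B} (h : z ∈ prinIdeal b) : prinIdeal z ⊆ prinIdeal b := by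
  obtain ⟨u, v, rfl⟩ := h
  rintro w ⟨s, t, rfl⟩
  exact ⟨s * u, v * t, by simp only [mul_assoc]⟩

theorem mem_prin_left (hband : ∀ x : B, x * x = x) (x y : B) : x * y ∈ prinIdeal x :=
  ⟨x, y, by rw [hband]⟩

theorem mem_prin_right (hband : ∀ x : B, x * x = x) (x y : B) : x * y ∈ prinIdeal y :=
  ⟨x, y, by rw [mul_assoc, hband]⟩

theorem prin_mul_subset_left (hband : ∀ x : B, x * x = x) (x y : B) :
    prinIdeal (x * y) ⊆ prinIdeal x := prin_trans (mem_prin_left hband x y)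

theorem prin_mul_subset_right (hband : ∀ x : B, x * x = x) (x y : B) :
    prinIdeal (x * y) ⊆ prinIdeal y := prin_trans (mem_prin_right hband x y)

theorem prin_swap (hband : ∀ x : B, x * x = x) (x y : B) :
    prinIdeal (x * y) = prinIdeal (y * x) := by
  have key : ∀ a b : B, prinIdeal (a * b) ⊆ prinIdeal (b * a) := by
    intro a b w hw
    obtain ⟨u, v, rfl⟩ := hw
    refine ⟨u * a, b * v, ?_⟩
    calc u * (a * b) * v = u * ((a * b) * (a * b)) * v := by rw [hband]
      _ = (u * a) * (b * a) * (b * v) := by simp only [mul_assoc]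
  exact Set.Subset.antisymm (key x y) (key y x)

theorem sandwich_mem (hband : ∀ x : B, x * x = x) (a w b : B) :
    a * w * b ∈ prinIdeal (a * b) := by
  refine ⟨a * w * b, a * w * b, ?_⟩
  refine Eq.symm ?_
  calc (a * w * b) * (a * b) * (a * w * b)
      = (a * w) * ((b * a) * (b * a)) * (w * b) := by simp only [mul_assoc]
    _ = (a * w) * (b * a) * (w * b) := by rw [hband]
    _ = (a * w * b) * (a * w * b) := by simp only [mul_assoc]
    _ = a * w * b := hband _

theorem prin_congr_left (hband : ∀ x : B, x * x = x) {b b' : B}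
    (h : prinIdeal b = prinIdeal b') (x : B) : prinIdeal (x * b) = prinIdeal (x * b') := by
  have key : ∀ c c' : B, c' ∈ prinIdeal c → prinIdeal (x * c') ⊆ prinIdeal (x * c) := by
    intro c c' hc'
    obtain ⟨u, v, rfl⟩ := hc'
    apply prin_trans
    obtain ⟨p, q, hpq⟩ := sandwich_mem hband x u c
    refine ⟨p, q * v, ?_⟩
    calc x * (u * c * v) = (x * u * c) * v := by simp only [mul_assoc]
      _ = (p * (x * c) * q) * v := by rw [← hpq]
      _ = p * (x * c) * (q * v) := by simp only [mul_assoc]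
  exact Set.Subset.antisymm (key b' b (h ▸ bnd_mem_self hband b))
    (key b b' (h.symm ▸ bnd_mem_self hband b'))

theorem prin_congr_right (hband : ∀ x : B, x * x = x) {b b' : B}
    (h : prinIdeal b = prinIdeal b') (x : B) : prinIdeal (b * x) = prinIdeal (b' * x) := by
  rw [prin_swap hband b x, prin_swap hband b' x]
  exact prin_congr_left hband h x

theorem absL (hband : ∀ x : B, x * x = x) {a A D : B} (h : a = A * a * D) : A * a = a := by
  conv_lhs => rw [h]
  calc A * (A * a * D) = (A * A) * a * D := by simp only [mul_assoc]
    _ = A * a * D := by rw [hband]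
    _ = a := h.symm

theorem absR (hband : ∀ x : B, x * x = x) {a A D : B} (h : a = A * a * D) : a * D = a := by
  conv_lhs => rw [h]
  calc (A * a * D) * D = A * a * (D * D) := by simp only [mul_assoc]
    _ = A * a * D := by rw [hband]
    _ = a := h.symm

theorem absE (hband : ∀ x : B, x * x = x) {a X e : B} (h : X * e = a) : a * e = a := by
  rw [← h, mul_assoc, hband]

theorem absE' (hband : ∀ x : B, x * x = x) {a X e : B} (h : e * X = a) : e * a = a := by
  rw [← h, ← mul_assoc, hband]

theorem bnd_rect (hband : ∀ x : B, x * x = x) {x y : B}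
    (h : prinIdeal x = prinIdeal y) : x * y * x = x := by
  obtain ⟨u, v, hy⟩ : y ∈ prinIdeal x := h ▸ bnd_mem_self hband y
  obtain ⟨p, q, hx⟩ : x ∈ prinIdeal y := h.symm ▸ bnd_mem_self hband x
  have h0 : x = (p * u) * x * (v * q) := by
    conv_lhs => rw [hx, hy]
    simp only [mul_assoc]
  have h1 : x = (x * (p * u)) * x * ((v * q) * x) := by
    calc x = x * x * x := by rw [hband, hband]
      _ = x * ((p * u) * x * (v * q)) * x := by rw [← h0]
      _ = (x * (p * u)) * x * ((v * q) * x) := by simp only [mul_assoc]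
  have hC : (x * (p * u)) * x = x := absL hband h1
  have hD : x * ((v * q) * x) = x := absR hband h1
  have hC' : (x * p) * (u * x) = x := by simpa only [mul_assoc] using hC
  have hD' : (x * v) * (q * x) = x := by simpa only [mul_assoc] using hD
  have hF : x * (u * x) = x := absE hband hC'
  have hH : (x * v) * x = x := absE' hband hD'
  calc x * y * x = x * (u * x * v) * x := by rw [hy]
    _ = (x * (u * x)) * (v * x) := by simp only [mul_assoc]
    _ = x * (v * x) := by rw [hF]
    _ = (x * v) * x := by rw [mul_assoc]
    _ = x := hH

theorem bnd_rect3 (hband : ∀ x : B, x * x = x) {x y z : B}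
    (h1 : prinIdeal x = prinIdeal y) (h2 : prinIdeal y = prinIdeal z) :
    x * y * z = x * z := by
  have hzx : z * x * z = z := bnd_rect hband (h1.trans h2).symm
  have hyz : y * z * y = y := bnd_rect hband h2
  have hyzy : y ∈ prinIdeal (y * z) := by
    refine ⟨y, y, Eq.symm ?_⟩
    calc y * (y * z) * y = (y * y) * (z * y) := by simp only [mul_assoc]
      _ = y * (z * y) := by rw [hband]
      _ = y * z * y := by rw [mul_assoc]
      _ = y := hyz
  have hyzc : prinIdeal (y * z) = prinIdeal y :=
    Set.Subset.antisymm (prin_mul_subset_left hband y z) (prin_trans hyzy)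
  have hkey : x * (y * z) * x = x := bnd_rect hband (h1.trans hyzc.symm)
  refine Eq.symm ?_
  calc x * z = (x * (y * z) * x) * z := by rw [hkey]
    _ = x * (y * (z * x * z)) := by simp only [mul_assoc]
    _ = x * (y * z) := by rw [hzx]
    _ = x * y * z := (mul_assoc x y z).symm

end BandLemmas

/-- The `k`-linear map `kB → kΛ(B)` induced by the support map `σ : b ↦ BbB` of a band. -/
noncomputable def suppAlgMap {B : Type*} [Semigroup B] (k : Type*) [CommRing k] :
    MonoidAlgebra k B →ₗ[k] MonoidAlgebra k (Set B) :=
  MonoidAlgebra.mapDomainLinearMap k k (prinIdeal (B := B))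

section Alg
variable {B : Type*} [Semigroup B] {k : Type*} [CommRing k]

theorem suppAlgMap_eq (f : MonoidAlgebra k B) :
    (suppAlgMap k f).coeff = Finsupp.mapDomain prinIdeal f.coeff := rfl

theorem single_mul_eq_mapDomain (x : B) (j : MonoidAlgebra k B) :
    (MonoidAlgebra.single x (1 : k) * j).coeff
      = Finsupp.mapDomain (fun b => x * b) j.coeff := by
  induction j using MonoidAlgebra.induction_linear with
  | zero => rw [mul_zero, MonoidAlgebra.coeff_zero, Finsupp.mapDomain_zero]
  | add f g hf hg => rw [mul_add, MonoidAlgebra.coeff_add, MonoidAlgebra.coeff_add,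
      Finsupp.mapDomain_add, hf, hg]
  | single a r =>
      rw [MonoidAlgebra.single_mul_single, one_mul, MonoidAlgebra.coeff_single,
        MonoidAlgebra.coeff_single, Finsupp.mapDomain_single]

theorem mul_single_eq_mapDomain (z : B) (j : MonoidAlgebra k B) :
    (j * MonoidAlgebra.single z (1 : k)).coeff
      = Finsupp.mapDomain (fun b => b * z) j.coeff := by
  induction j using MonoidAlgebra.induction_linear with
  | zero => rw [zero_mul, MonoidAlgebra.coeff_zero, Finsupp.mapDomain_zero]
  | add f g hf hg => rw [add_mul, MonoidAlgebra.coeff_add, MonoidAlgebra.coeff_add,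
      Finsupp.mapDomain_add, hf, hg]
  | single a r =>
      rw [MonoidAlgebra.single_mul_single, mul_one, MonoidAlgebra.coeff_single,
        MonoidAlgebra.coeff_single, Finsupp.mapDomain_single]

end Alg
section Kern
variable {B : Type*} [Semigroup B] {k : Type*} [CommRing k]

theorem sig_single_mul (hband : ∀ x : B, x * x = x) (x : B) {j : MonoidAlgebra k B}
    (hj : Finsupp.mapDomain (prinIdeal (B := B)) j.coeff = 0) :
    Finsupp.mapDomain prinIdeal (MonoidAlgebra.single x (1 : k) * j).coeff = 0 := by
  classical
  rw [single_mul_eq_mapDomain, ← Finsupp.mapDomain_comp]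
  have hcomp : ((prinIdeal (B := B)) ∘ fun b => x * b)
      = (fun s => if h : ∃ b : B, prinIdeal b = s then prinIdeal (x * h.choose) else ∅)
        ∘ (prinIdeal (B := B)) := by
    funext b
    have hex : ∃ c : B, prinIdeal c = prinIdeal b := ⟨b, rfl⟩
    simp only [Function.comp_apply, dif_pos hex]
    exact (prin_congr_left hband hex.choose_spec x).symm
  rw [hcomp, Finsupp.mapDomain_comp, hj, Finsupp.mapDomain_zero]

theorem sig_mul_single (hband : ∀ x : B, x * x = x) (z : B) {j : MonoidAlgebra k B}
    (hj : Finsupp.mapDomain (prinIdeal (B := B)) j.coeff = 0) :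
    Finsupp.mapDomain prinIdeal (j * MonoidAlgebra.single z (1 : k)).coeff = 0 := by
  classical
  rw [mul_single_eq_mapDomain, ← Finsupp.mapDomain_comp]
  have hcomp : ((prinIdeal (B := B)) ∘ fun b => b * z)
      = (fun s => if h : ∃ b : B, prinIdeal b = s then prinIdeal (h.choose * z) else ∅)
        ∘ (prinIdeal (B := B)) := by
    funext b
    have hex : ∃ c : B, prinIdeal c = prinIdeal b := ⟨b, rfl⟩
    simp only [Function.comp_apply, dif_pos hex]
    exact (prin_congr_right hband hex.choose_spec z).symm
  rw [hcomp, Finsupp.mapDomain_comp, hj, Finsupp.mapDomain_zero]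

theorem sig_mul_left (hband : ∀ x : B, x * x = x) {j : MonoidAlgebra k B}
    (hj : Finsupp.mapDomain (prinIdeal (B := B)) j.coeff = 0) (a : MonoidAlgebra k B) :
    Finsupp.mapDomain prinIdeal (a * j).coeff = 0 := by
  induction a using MonoidAlgebra.induction_linear with
  | zero => rw [zero_mul, MonoidAlgebra.coeff_zero, Finsupp.mapDomain_zero]
  | add f g hf hg => rw [add_mul, MonoidAlgebra.coeff_add, Finsupp.mapDomain_add, hf, hg, add_zero]
  | single y r =>
      have h1 : (MonoidAlgebra.single y r : MonoidAlgebra k B) = r • MonoidAlgebra.single y (1 : k) := by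
        rw [MonoidAlgebra.smul_single', mul_one]
      rw [h1, smul_mul_assoc, MonoidAlgebra.coeff_smul, Finsupp.mapDomain_smul, sig_single_mul hband y hj, smul_zero]

theorem sig_mul_right (hband : ∀ x : B, x * x = x) {j : MonoidAlgebra k B}
    (hj : Finsupp.mapDomain (prinIdeal (B := B)) j.coeff = 0) (a : MonoidAlgebra k B) :
    Finsupp.mapDomain prinIdeal (j * a).coeff = 0 := by
  induction a using MonoidAlgebra.induction_linear with
  | zero => rw [mul_zero, MonoidAlgebra.coeff_zero, Finsupp.mapDomain_zero]
  | add f g hf hg => rw [mul_add, MonoidAlgebra.coeff_add, Finsupp.mapDomain_add, hf, hg, add_zero]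
  | single y r =>
      have h1 : (MonoidAlgebra.single y r : MonoidAlgebra k B) = r • MonoidAlgebra.single y (1 : k) := by
        rw [MonoidAlgebra.smul_single', mul_one]
      rw [h1, mul_smul_comm, MonoidAlgebra.coeff_smul, Finsupp.mapDomain_smul, sig_mul_single hband y hj, smul_zero]

end Kern
/-- `setPow s n` is the set of products of `n+1` elements of `s` (pointwise). -/
def setPow {R : Type*} [Mul R] (s : Set R) : ℕ → Set R
  | 0 => s
  | n + 1 => setPow s n * s

theorem setPow_split {R : Type*} [Semigroup R] (s : Set R) (n m : ℕ) :
    setPow s (n + m + 1) = setPow s n * setPow s m := by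
  induction m with
  | zero => rfl
  | succ m ih =>
    show setPow s ((n + m + 1) + 1) = _
    rw [show setPow s ((n + m + 1) + 1) = setPow s (n + m + 1) * s from rfl, ih, mul_assoc]
    rfl

section Nilp
variable {B : Type*} [Semigroup B] {k : Type*} [CommRing k]

theorem mapDomain_apply_sum {C : Type*} (φ : B → C) (g : B →₀ k) (c : C) :
    Finsupp.mapDomain φ g c = ∑ y ∈ g.support, (Finsupp.single (φ y) (g y) : C →₀ k) c := by
  rw [Finsupp.mapDomain, Finsupp.sum_apply]
  rfl

theorem lemU [Finite B] (hband : ∀ x : B, x * x = x) {d : ℕ} {g : B →₀ k}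
    (hg : Finsupp.mapDomain (prinIdeal (B := B)) g = 0)
    (hgs : ∀ y ∈ g.support, (prinIdeal y).ncard ≤ d) {x z : B}
    (hx : (prinIdeal x).ncard ≤ d) (hz : (prinIdeal z).ncard ≤ d) {b : B}
    (hb : d ≤ (prinIdeal b).ncard) :
    Finsupp.mapDomain (fun y => x * y * z) g b = 0 := by
  classical
  simp only [mapDomain_apply_sum]
  by_cases hex : ∃ y₀ ∈ g.support, x * y₀ * z = b
  · obtain ⟨y₀, hy₀, hxyz⟩ := hex
    have hsub : ∀ w : B, prinIdeal b ⊆ prinIdeal w → (prinIdeal w).ncard ≤ d →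
        prinIdeal b = prinIdeal w := fun w hw hcard =>
      Set.eq_of_subset_of_ncard_le hw (le_trans hcard hb) (Set.toFinite _)
    have hbx : prinIdeal b = prinIdeal x :=
      hsub x (hxyz ▸ ((prin_mul_subset_left hband (x * y₀) z).trans
        (prin_mul_subset_left hband x y₀))) hx
    have hbz : prinIdeal b = prinIdeal z :=
      hsub z (hxyz ▸ prin_mul_subset_right hband (x * y₀) z) hz
    have hby₀ : prinIdeal b = prinIdeal y₀ :=
      hsub y₀ (hxyz ▸ ((prin_mul_subset_left hband (x * y₀) z).trans
        (prin_mul_subset_right hband x y₀))) (hgs y₀ hy₀)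
    have hiff : ∀ y ∈ g.support, (x * y * z = b ↔ prinIdeal y = prinIdeal b) := by
      intro y hy
      constructor
      · intro he
        exact (hsub y (he ▸ ((prin_mul_subset_left hband (x * y) z).trans
          (prin_mul_subset_right hband x y))) (hgs y hy)).symm
      · intro hc
        have e1 : x * y * z = x * z := bnd_rect3 hband (hbx.symm.trans hc.symm) (hc.trans hbz)
        have e2 : x * y₀ * z = x * z :=
          bnd_rect3 hband (hbx.symm.trans hby₀) (hby₀.symm.trans hbz)
        rw [e1, ← e2, hxyz]
    have hterm : ∀ y ∈ g.support,
        (Finsupp.single (x * y * z) (g y) : B →₀ k) b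
          = (Finsupp.single (prinIdeal y) (g y) : Set B →₀ k) (prinIdeal b) := by
      intro y hy
      by_cases hc : prinIdeal y = prinIdeal b
      · rw [(hiff y hy).mpr hc, hc, Finsupp.single_eq_same, Finsupp.single_eq_same]
      · rw [Finsupp.single_eq_of_ne (fun he => hc ((hiff y hy).mp he.symm)),
          Finsupp.single_eq_of_ne (Ne.symm hc)]
    rw [Finset.sum_congr rfl hterm, ← mapDomain_apply_sum, hg]
    rfl
  · refine Finset.sum_eq_zero fun y hy => ?_
    exact Finsupp.single_eq_of_ne fun he => hex ⟨y, hy, he.symm⟩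

theorem lemV2 [Finite B] (hband : ∀ x : B, x * x = x) {d : ℕ} {g : MonoidAlgebra k B}
    (hg : Finsupp.mapDomain (prinIdeal (B := B)) g.coeff = 0)
    (hgs : ∀ y ∈ g.coeff.support, (prinIdeal y).ncard ≤ d) {z : B}
    (hzd : (prinIdeal z).ncard ≤ d) (s : k) (f : MonoidAlgebra k B)
    (hfs : ∀ w ∈ f.coeff.support, (prinIdeal w).ncard ≤ d) {b : B}
    (hb : d ≤ (prinIdeal b).ncard) :
    ((f * g) * MonoidAlgebra.single z s).coeff b = 0 := by
  classical
  induction f using MonoidAlgebra.induction with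
  | zero =>
    rw [zero_mul, zero_mul]
    exact Finsupp.zero_apply
  | single_add x r f hxf hr ih =>
    have hdisj : Disjoint (Finsupp.single x r).support f.coeff.support := by
      rw [Finsupp.support_single_ne_zero x hr]
      simpa using hxf
    have hsupp_eq : (MonoidAlgebra.single x r + f).coeff.support = {x} ∪ f.coeff.support := by
      rw [MonoidAlgebra.coeff_add, MonoidAlgebra.coeff_single, Finsupp.support_add_eq hdisj, Finsupp.support_single_ne_zero x hr]
    have hxd : (prinIdeal x).ncard ≤ d := hfs x (by
      rw [hsupp_eq]; exact Finset.mem_union_left _ (Finset.mem_singleton_self x))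
    have hfs' : ∀ w ∈ f.coeff.support, (prinIdeal w).ncard ≤ d := fun w hw =>
      hfs w (by rw [hsupp_eq]; exact Finset.mem_union_right _ hw)
    rw [add_mul, add_mul, MonoidAlgebra.coeff_add, Finsupp.add_apply, ih hfs', add_zero]
    have e1 : (MonoidAlgebra.single x r : MonoidAlgebra k B) = r • MonoidAlgebra.single x (1 : k) := by
      rw [MonoidAlgebra.smul_single', mul_one]
    have e2 : (MonoidAlgebra.single z s : MonoidAlgebra k B)
        = s • MonoidAlgebra.single z (1 : k) := by
      rw [MonoidAlgebra.smul_single', mul_one]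
    rw [e1, smul_mul_assoc, smul_mul_assoc, e2, mul_smul_comm,
      MonoidAlgebra.coeff_smul, MonoidAlgebra.coeff_smul, Finsupp.smul_apply, Finsupp.smul_apply,
      mul_single_eq_mapDomain, single_mul_eq_mapDomain, ← Finsupp.mapDomain_comp]
    have h0 : Finsupp.mapDomain ((fun b => b * z) ∘ fun b => x * b) g.coeff b = 0 := by
      have := lemU hband hg hgs hxd hzd hb
      simpa [Function.comp_def] using this
    rw [h0, smul_zero, smul_zero]

theorem lemV3 [Finite B] (hband : ∀ x : B, x * x = x) {d : ℕ} {g : MonoidAlgebra k B}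
    (hg : Finsupp.mapDomain (prinIdeal (B := B)) g.coeff = 0)
    (hgs : ∀ y ∈ g.coeff.support, (prinIdeal y).ncard ≤ d) (f h : MonoidAlgebra k B)
    (hfs : ∀ w ∈ f.coeff.support, (prinIdeal w).ncard ≤ d)
    (hhs : ∀ w ∈ h.coeff.support, (prinIdeal w).ncard ≤ d) {b : B}
    (hb : d ≤ (prinIdeal b).ncard) :
    (f * g * h).coeff b = 0 := by
  classical
  induction h using MonoidAlgebra.induction with
  | zero =>
    rw [mul_zero]
    exact Finsupp.zero_apply
  | single_add z s h' hzh' hs ih =>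
    have hdisj : Disjoint (Finsupp.single z s).support h'.coeff.support := by
      rw [Finsupp.support_single_ne_zero z hs]
      simpa using hzh'
    have hsupp_eq : (MonoidAlgebra.single z s + h').coeff.support = {z} ∪ h'.coeff.support := by
      rw [MonoidAlgebra.coeff_add, MonoidAlgebra.coeff_single, Finsupp.support_add_eq hdisj, Finsupp.support_single_ne_zero z hs]
    have hzd : (prinIdeal z).ncard ≤ d := hhs z (by
      rw [hsupp_eq]; exact Finset.mem_union_left _ (Finset.mem_singleton_self z))
    have hhs' : ∀ w ∈ h'.coeff.support, (prinIdeal w).ncard ≤ d := fun w hw =>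
      hhs w (by rw [hsupp_eq]; exact Finset.mem_union_right _ hw)
    rw [mul_add, MonoidAlgebra.coeff_add, Finsupp.add_apply, ih hhs', add_zero]
    exact lemV2 hband hg hgs hzd s f hfs hb

theorem lemStep [Finite B] (hband : ∀ x : B, x * x = x) {d : ℕ} {f g h : MonoidAlgebra k B}
    (hgσ : Finsupp.mapDomain (prinIdeal (B := B)) g.coeff = 0)
    (hfs : ∀ w ∈ f.coeff.support, (prinIdeal w).ncard < d + 1)
    (hgs : ∀ w ∈ g.coeff.support, (prinIdeal w).ncard < d + 1)
    (hhs : ∀ w ∈ h.coeff.support, (prinIdeal w).ncard < d + 1) :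
    Finsupp.mapDomain (prinIdeal (B := B)) (f * g * h).coeff = 0 ∧
      ∀ w ∈ (f * g * h).coeff.support, (prinIdeal w).ncard < d := by
  constructor
  · exact sig_mul_right hband (sig_mul_left hband hgσ f) h
  · intro w hw
    by_contra hcon
    have hle : d ≤ (prinIdeal w).ncard := Nat.le_of_not_lt hcon
    have h0 := lemV3 hband hgσ (fun y hy => Nat.lt_succ_iff.mp (hgs y hy)) f h
      (fun y hy => Nat.lt_succ_iff.mp (hfs y hy))
      (fun y hy => Nat.lt_succ_iff.mp (hhs y hy)) hle
    exact (Finsupp.mem_support_iff.mp hw) h0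

end Nilp
/-- Brown's theorem: for a finite band `B` and commutative ring `k`, the kernel of the
map `kB → kΛ(B)` induced by the support map `b ↦ BbB` is a nilpotent two-sided ideal. -/
theorem band_support_kernel_nilpotent {B : Type*} [Semigroup B] [Fintype B]
    (hband : ∀ x : B, x * x = x) (k : Type*) [CommRing k] :
    (∀ (a j : MonoidAlgebra k B), suppAlgMap k j = 0 →
        suppAlgMap k (a * j) = 0 ∧ suppAlgMap k (j * a) = 0) ∧
    (∃ n : ℕ, setPow {f : MonoidAlgebra k B | suppAlgMap k f = 0} n ⊆ {0}) := by
  classical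
  constructor
  · intro a j hj
    rw [← MonoidAlgebra.coeff_eq_zero, suppAlgMap_eq] at hj
    exact ⟨by rw [← MonoidAlgebra.coeff_eq_zero, suppAlgMap_eq]; exact sig_mul_left hband hj a,
           by rw [← MonoidAlgebra.coeff_eq_zero, suppAlgMap_eq]; exact sig_mul_right hband hj a⟩
  · set N := Fintype.card B with hN
    refine ⟨3 ^ (N + 1) - 1, ?_⟩
    set K : Set (MonoidAlgebra k B) := {f | suppAlgMap k f = 0} with hK
    have hdegN : ∀ b : B, (prinIdeal b).ncard ≤ N := by
      intro b
      calc (prinIdeal b).ncard ≤ (Set.univ : Set B).ncard :=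
            Set.ncard_le_ncard (Set.subset_univ _) Set.finite_univ
        _ = N := by rw [Set.ncard_univ, Nat.card_eq_fintype_card]
    have main : ∀ m : ℕ, ∀ w ∈ setPow K (3 ^ m - 1),
        Finsupp.mapDomain (prinIdeal (B := B)) w.coeff = 0 ∧
          ∀ b ∈ w.coeff.support, (prinIdeal b).ncard < N + 1 - m := by
      intro m
      induction m with
      | zero =>
        intro w hw
        have h30 : (3 : ℕ) ^ 0 - 1 = 0 := by norm_num
        rw [h30] at hw
        have hw' : suppAlgMap k w = 0 := hw
        rw [← MonoidAlgebra.coeff_eq_zero, suppAlgMap_eq] at hw'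
        refine ⟨hw', fun b _ => ?_⟩
        have := hdegN b
        omega
      | succ m ih =>
        intro w hw
        have h1 : 1 ≤ (3 : ℕ) ^ m := Nat.one_le_pow _ _ (by norm_num)
        have harith : 3 ^ (m + 1) - 1 = ((3 ^ m - 1) + (3 ^ m - 1) + 1) + (3 ^ m - 1) + 1 := by
          have h2 : (3 : ℕ) ^ (m + 1) = 3 ^ m * 3 := pow_succ 3 m
          omega
        rw [harith, setPow_split, setPow_split] at hw
        obtain ⟨w12, hw12, w3, hw3, rfl⟩ := Set.mem_mul.mp hw
        obtain ⟨w1, hw1, w2, hw2, rfl⟩ := Set.mem_mul.mp hw12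
        obtain ⟨hσ1, hs1⟩ := ih w1 hw1
        obtain ⟨hσ2, hs2⟩ := ih w2 hw2
        obtain ⟨hσ3, hs3⟩ := ih w3 hw3
        by_cases hm : m ≤ N
        · have heq : N + 1 - m = (N - m) + 1 := by omega
          rw [heq] at hs1 hs2 hs3
          have hst := lemStep hband hσ2 hs1 hs2 hs3
          have heq2 : N + 1 - (m + 1) = N - m := by omega
          rw [heq2]
          exact hst
        · have hz1 : w1 = 0 := by
            rw [← MonoidAlgebra.coeff_eq_zero]
            apply Finsupp.support_eq_empty.mp
            rw [Finset.eq_empty_iff_forall_notMem]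
            intro b hb
            have := hs1 b hb
            omega
          rw [hz1, zero_mul, zero_mul]
          exact ⟨Finsupp.mapDomain_zero, fun b hb => by simp at hb⟩
    intro w hw
    have hb := (main (N + 1) w hw).2
    have hwz : w = 0 := by
      rw [← MonoidAlgebra.coeff_eq_zero]
      apply Finsupp.support_eq_empty.mp
      rw [Finset.eq_empty_iff_forall_notMem]
      intro b hbb
      have h := hb b hbb
      omega
    exact hwz
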